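/- For any two finite simple graphs F¹ and F² and any integer d ≥ 1, the d-measure of their disjoint union satisfies 𝓗^d(F¹ ⊔ F²) = 𝓗^d(F¹) + 𝓗^d(F²), where the equation is read in the extended nonnegative reals (so if either side involves +∞, both sides equal +∞). -/

import Mathlib

/-- An embedding of a finite simple graph `G` into a `d`-dimensional space: an injective
map `η` from the vertices to `d`-tuples of natural numbers such that two vertices are
adjacent iff their images differ in every coordinate. -/
def IsSpaceEmbedding {V : Type*} (G : SimpleGraph V) (d : ℕ) (η : V → Fin d → ℕ) : Prop :=
  Function.Injective η ∧ ∀ u v : V, G.Adj u v ↔ ∀ k, η u k ≠ η v k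

/-- The hyper-rectangle `R(J₁,…,J_d)`: the set of `d`-tuples whose `k`-th coordinate lies
in `J k`. -/
def rect {d : ℕ} (J : Fin d → Finset ℕ) : Set (Fin d → ℕ) := {x | ∀ k, x k ∈ J k}

/-- The volume `|J₁|⋯|J_d|` of the hyper-rectangle `R(J₁,…,J_d)`. -/
def rvol {d : ℕ} (J : Fin d → Finset ℕ) : ℕ := ∏ k, (J k).card

/-- A rectangle co-cover of an embedding `η` of `G`: a finite family of pairwise disjoint
hyper-rectangles (with all sides nonempty) whose union contains `η(V(G))` and such that
every pair of distinct non-adjacent vertices has both images in a common hyper-rectangle. -/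
def IsRectCoCover {V : Type*} (G : SimpleGraph V) {d m : ℕ}
    (η : V → Fin d → ℕ) (R : Fin m → Fin d → Finset ℕ) : Prop :=
  (∀ i k, (R i k).Nonempty) ∧
  (∀ i j : Fin m, i ≠ j → Disjoint (rect (R i)) (rect (R j))) ∧
  (∀ v : V, ∃ i, η v ∈ rect (R i)) ∧
  (∀ u v : V, u ≠ v → ¬ G.Adj u v → ∃ i, η u ∈ rect (R i) ∧ η v ∈ rect (R i))

/-- The `d`-volume `vol^d(G)`: the minimum over all embeddings of `G` into a
`d`-dimensional space and all rectangle co-covers of the embedding of the total volume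
of the co-cover. -/
noncomputable def dVol {V : Type*} (G : SimpleGraph V) (d : ℕ) : ℕ :=
  sInf {s | ∃ η : V → Fin d → ℕ, IsSpaceEmbedding G d η ∧
    ∃ (m : ℕ) (R : Fin m → Fin d → Finset ℕ),
      IsRectCoCover G η R ∧ s = ∑ i, rvol (R i)}

/-- The disjoint union of two simple graphs, on the sum of their vertex types. -/
def disjUnionGraph {V₁ V₂ : Type*} (G₁ : SimpleGraph V₁) (G₂ : SimpleGraph V₂) :
    SimpleGraph (V₁ ⊕ V₂) where
  Adj a b := Sum.LiftRel G₁.Adj G₂.Adj a b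
  symm := by
    constructor
    intro a b h
    cases h with
    | inl h => exact Sum.LiftRel.inl h.symm
    | inr h => exact Sum.LiftRel.inr h.symm
  loopless := by
    constructor
    intro a h
    cases h with
    | inl h => exact G₁.irrefl h
    | inr h => exact G₂.irrefl h

open Classical in
/-- The `d`-measure of a finite simple graph `F`: `vol^d(F̄)` if the complement of `F`
admits an embedding into a `d`-dimensional space, and `+∞` otherwise. -/
noncomputable def graphMeasure {V : Type*} (F : SimpleGraph V) (d : ℕ) : ENNReal :=
  if ∃ η : V → Fin d → ℕ, IsSpaceEmbedding Fᶜ d η then ((dVol Fᶜ d : ℕ) : ENNReal) else ⊤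

section Helpers
open Sum Finset

/-- The set of achievable co-cover volumes. -/
def volSet {V : Type*} (G : SimpleGraph V) (d : ℕ) : Set ℕ :=
  {s | ∃ η : V → Fin d → ℕ, IsSpaceEmbedding G d η ∧
    ∃ (m : ℕ) (R : Fin m → Fin d → Finset ℕ),
      IsRectCoCover G η R ∧ s = ∑ i, rvol (R i)}

lemma dVol_eq_sInf {V : Type*} (G : SimpleGraph V) (d : ℕ) :
    dVol G d = sInf (volSet G d) := rfl

/-- Given any embedding, the single big rectangle is a co-cover. -/
lemma exists_cocover {V : Type*} [Fintype V] (G : SimpleGraph V) {d : ℕ}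
    {η : V → Fin d → ℕ} (h : IsSpaceEmbedding G d η) :
    ∃ (m : ℕ) (R : Fin m → Fin d → Finset ℕ), IsRectCoCover G η R := by
  by_cases hV : Nonempty V
  · refine ⟨1, fun _ k => Finset.univ.image (fun v => η v k), ?_, ?_, ?_, ?_⟩
    · intro i k
      exact Finset.Nonempty.image Finset.univ_nonempty _
    · intro i j hij
      exact absurd (Subsingleton.elim i j) hij
    · intro v
      exact ⟨0, fun k => Finset.mem_image_of_mem _ (Finset.mem_univ v)⟩
    · intro u v _ _
      exact ⟨0, fun k => Finset.mem_image_of_mem _ (Finset.mem_univ u),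
        fun k => Finset.mem_image_of_mem _ (Finset.mem_univ v)⟩
  · exact ⟨0, fun i => i.elim0, fun i => i.elim0, fun i => i.elim0,
      fun v => (hV ⟨v⟩).elim, fun u => (hV ⟨u⟩).elim⟩

lemma volSet_nonempty {V : Type*} [Fintype V] {G : SimpleGraph V} {d : ℕ}
    {η : V → Fin d → ℕ} (h : IsSpaceEmbedding G d η) : (volSet G d).Nonempty := by
  obtain ⟨m, R, hR⟩ := exists_cocover G h
  exact ⟨∑ i, rvol (R i), η, h, m, R, hR, rfl⟩
section Combine
variable {V₁ V₂ : Type*} [Fintype V₁] [Fintype V₂]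
  {G : SimpleGraph (V₁ ⊕ V₂)} {G₁ : SimpleGraph V₁} {G₂ : SimpleGraph V₂}

lemma combine
    (hll : ∀ u v, G.Adj (inl u) (inl v) ↔ G₁.Adj u v)
    (hrr : ∀ u v, G.Adj (inr u) (inr v) ↔ G₂.Adj u v)
    (hlr : ∀ u v, G.Adj (inl u) (inr v))
    {d : ℕ} (hd : 0 < d)
    {η₁ : V₁ → Fin d → ℕ} (h₁ : IsSpaceEmbedding G₁ d η₁)
    {η₂ : V₂ → Fin d → ℕ} (h₂ : IsSpaceEmbedding G₂ d η₂)
    {m₁ m₂ : ℕ} {R₁ : Fin m₁ → Fin d → Finset ℕ} {R₂ : Fin m₂ → Fin d → Finset ℕ}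
    (hR₁ : IsRectCoCover G₁ η₁ R₁) (hR₂ : IsRectCoCover G₂ η₂ R₂) :
    ∃ η : V₁ ⊕ V₂ → Fin d → ℕ, IsSpaceEmbedding G d η ∧
      ∃ R : Fin (m₁ + m₂) → Fin d → Finset ℕ, IsRectCoCover G η R ∧
        ∑ i, rvol (R i) = (∑ i, rvol (R₁ i)) + ∑ i, rvol (R₂ i) := by
  classical
  set N : ℕ := ((Finset.univ.sup fun v : V₁ => Finset.univ.sup fun k => η₁ v k) ⊔
      Finset.univ.sup fun i : Fin m₁ => Finset.univ.sup fun k => (R₁ i k).sup id) + 1 with hN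
  have hηN : ∀ v k, η₁ v k < N := by
    intro v k
    have : η₁ v k ≤ Finset.univ.sup fun v : V₁ => Finset.univ.sup fun k => η₁ v k :=
      le_trans (Finset.le_sup (Finset.mem_univ k))
        (Finset.le_sup (f := fun v : V₁ => Finset.univ.sup fun k => η₁ v k) (Finset.mem_univ v))
    omega
  have hRN : ∀ i k, ∀ a ∈ R₁ i k, a < N := by
    intro i k a ha
    have h1 : a ≤ (R₁ i k).sup id := Finset.le_sup (f := id) ha
    have h2 : (R₁ i k).sup id ≤
        Finset.univ.sup fun i : Fin m₁ => Finset.univ.sup fun k => (R₁ i k).sup id :=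
      le_trans (Finset.le_sup (f := fun k => (R₁ i k).sup id) (Finset.mem_univ k))
        (Finset.le_sup (f := fun i : Fin m₁ => Finset.univ.sup fun k => (R₁ i k).sup id)
          (Finset.mem_univ i))
    omega
  set k₀ : Fin d := ⟨0, hd⟩ with hk₀
  refine ⟨Sum.elim η₁ (fun v k => η₂ v k + N), ⟨?_, ?_⟩,
    Fin.append R₁ (fun i k => (R₂ i k).image (· + N)), ⟨?_, ?_, ?_, ?_⟩, ?_⟩
  · -- injectivity
    rintro (u | u) (v | v) h
    · exact congrArg inl (h₁.1 h)
    · have h' := congrFun h k₀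
      simp only [Sum.elim_inl, Sum.elim_inr] at h'
      exact absurd h' (by have := hηN u k₀; omega)
    · have h' := congrFun h k₀
      simp only [Sum.elim_inl, Sum.elim_inr] at h'
      exact absurd h' (by have := hηN v k₀; omega)
    · refine congrArg inr (h₂.1 (funext fun k => ?_))
      have h' := congrFun h k
      simp only [Sum.elim_inr] at h'
      omega
  · -- adjacency
    rintro (u | u) (v | v)
    · simpa using (hll u v).trans (h₁.2 u v)
    · simp only [Sum.elim_inl, Sum.elim_inr]
      exact iff_of_true (hlr u v) (fun k => by have := hηN u k; omega)
    · simp only [Sum.elim_inl, Sum.elim_inr]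
      exact iff_of_true ((hlr v u).symm) (fun k => by have := hηN v k; omega)
    · simp only [Sum.elim_inr]
      refine (hrr u v).trans ((h₂.2 u v).trans ?_)
      constructor <;> · intro h k; have := h k; omega
  · -- nonempty sides
    intro i k
    induction i using Fin.addCases with
    | left i => simpa using hR₁.1 i k
    | right i =>
      rw [Fin.append_right]
      exact (hR₂.1 i k).image _
  · -- pairwise disjoint
    have cross : ∀ (i : Fin m₁) (j : Fin m₂),
        Disjoint (rect (R₁ i)) (rect fun k => (R₂ j k).image (· + N)) := by
      intro i j
      rw [Set.disjoint_left]
      intro x hx hx'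
      have h1 : x k₀ < N := hRN i k₀ _ (hx k₀)
      have h2 := hx' k₀
      simp only [rect, Set.mem_setOf_eq, Finset.mem_image] at h2
      obtain ⟨a, -, ha⟩ := h2
      omega
    have shiftd : ∀ (i j : Fin m₂), i ≠ j →
        Disjoint (rect fun k => (R₂ i k).image (· + N)) (rect fun k => (R₂ j k).image (· + N)) := by
      intro i j hij
      rw [Set.disjoint_left]
      intro x hx hx'
      have key : ∀ (l : Fin m₂), x ∈ rect (fun k => (R₂ l k).image (· + N)) →
          (fun k => x k - N) ∈ rect (R₂ l) := by
        intro l hl k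
        obtain ⟨a, ha, hax⟩ := Finset.mem_image.mp (hl k)
        simpa [← hax] using ha
      exact Set.disjoint_left.mp (hR₂.2.1 i j hij) (key i hx) (key j hx')
    intro i j hij
    induction i using Fin.addCases with
    | left i =>
      induction j using Fin.addCases with
      | left j =>
        have : i ≠ j := fun h => hij (by rw [h])
        simpa [Fin.append_left] using hR₁.2.1 i j this
      | right j => simpa [Fin.append_left, Fin.append_right] using cross i j
    | right i =>
      induction j using Fin.addCases with
      | left j => simpa [Fin.append_left, Fin.append_right] using (cross j i).symm
      | right j =>
        have : i ≠ j := fun h => hij (by rw [h])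
        simpa [Fin.append_right] using shiftd i j this
  · -- cover
    rintro (u | u)
    · obtain ⟨i, hi⟩ := hR₁.2.2.1 u
      exact ⟨Fin.castAdd m₂ i, by simpa [Fin.append_left] using hi⟩
    · obtain ⟨i, hi⟩ := hR₂.2.2.1 u
      refine ⟨Fin.natAdd m₁ i, ?_⟩
      intro k
      simp only [Fin.append_right, Sum.elim_inr]
      exact Finset.mem_image_of_mem (· + N) (hi k)
  · -- nonadjacent pairs
    rintro (u | u) (v | v) hne hnadj
    · have : ¬ G₁.Adj u v := fun h => hnadj ((hll u v).mpr h)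
      obtain ⟨i, hi, hi'⟩ := hR₁.2.2.2 u v (fun h => hne (by rw [h])) this
      exact ⟨Fin.castAdd m₂ i, by simpa [Fin.append_left] using hi,
        by simpa [Fin.append_left] using hi'⟩
    · exact absurd (hlr u v) hnadj
    · exact absurd (hlr v u).symm hnadj
    · have : ¬ G₂.Adj u v := fun h => hnadj ((hrr u v).mpr h)
      obtain ⟨i, hi, hi'⟩ := hR₂.2.2.2 u v (fun h => hne (by rw [h])) this
      refine ⟨Fin.natAdd m₁ i, ?_, ?_⟩ <;>
        · intro k
          simp only [Fin.append_right, Sum.elim_inr]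
          exact Finset.mem_image_of_mem (· + N) (by first | exact hi k | exact hi' k)
  · -- volume
    rw [Fin.sum_univ_add]
    congr 1
    · exact Finset.sum_congr rfl fun i _ => by rw [Fin.append_left]
    · refine Finset.sum_congr rfl fun i _ => ?_
      rw [Fin.append_right]
      unfold rvol
      exact Finset.prod_congr rfl fun k _ =>
        Finset.card_image_of_injective _ (add_left_injective N)

end Combine
section Split

open Classical in
lemma restrict_cocover {X : Type*} {W : Type*} [Fintype W]
    {G : SimpleGraph X} {Gw : SimpleGraph W} (ι : W → X)
    (hadj : ∀ u v, G.Adj (ι u) (ι v) ↔ Gw.Adj u v) (hι : Function.Injective ι)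
    {d : ℕ} (hd : 0 < d)
    {η : X → Fin d → ℕ} (h : IsSpaceEmbedding G d η)
    {m : ℕ} {R : Fin m → Fin d → Finset ℕ} (hR : IsRectCoCover G η R) :
    ∃ s ∈ volSet Gw d, s = ∑ i : Fin m,
      ∏ k, (((Finset.univ.filter (fun u : W => η (ι u) ∈ rect (R i))).image
        (fun u => η (ι u) k)).card) := by
  classical
  set k₀ : Fin d := ⟨0, hd⟩ with hk₀
  set C : Fin m → Finset W := fun i => Finset.univ.filter (fun u => η (ι u) ∈ rect (R i))
    with hC
  set T : Fin m → Fin d → Finset ℕ := fun i k => (C i).image (fun u => η (ι u) k) with hT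
  set s₀ : Finset (Fin m) := Finset.univ.filter (fun i => (C i).Nonempty) with hs₀
  set e := s₀.orderIsoOfFin rfl with he
  have hTsub : ∀ i, rect (T i) ⊆ rect (R i) := by
    intro i x hx k
    obtain ⟨u, hu, hux⟩ := Finset.mem_image.mp (hx k)
    exact hux ▸ (Finset.mem_filter.mp hu).2 k
  have hmem : ∀ (u : W) (i : Fin m), η (ι u) ∈ rect (R i) → η (ι u) ∈ rect (T i) := by
    intro u i hi k
    exact Finset.mem_image_of_mem _ (Finset.mem_filter.mpr ⟨Finset.mem_univ u, hi⟩)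
  refine ⟨_, ⟨fun u => η (ι u), ⟨h.1.comp hι, fun u v => (hadj u v).symm.trans (h.2 _ _)⟩,
    s₀.card, fun j => T (e j), ⟨?_, ?_, ?_, ?_⟩, rfl⟩, ?_⟩
  · -- nonempty sides
    intro j k
    have : (C (e j)).Nonempty := (Finset.mem_filter.mp (e j).2).2
    exact this.image _
  · -- disjoint
    intro j j' hjj'
    have : (e j : Fin m) ≠ (e j' : Fin m) := by
      intro hcontra
      exact hjj' (e.injective (Subtype.ext hcontra))
    exact Set.disjoint_of_subset (hTsub _) (hTsub _) (hR.2.1 _ _ this)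
  · -- cover
    intro u
    obtain ⟨i, hi⟩ := hR.2.2.1 (ι u)
    have hCi : i ∈ s₀ := Finset.mem_filter.mpr ⟨Finset.mem_univ i,
      ⟨u, Finset.mem_filter.mpr ⟨Finset.mem_univ u, hi⟩⟩⟩
    refine ⟨e.symm ⟨i, hCi⟩, ?_⟩
    show η (ι u) ∈ rect (T (e (e.symm ⟨i, hCi⟩) : Fin m))
    rw [OrderIso.apply_symm_apply]
    exact hmem u i hi
  · -- pairs
    intro u v huv hnadj
    have hna : ¬ G.Adj (ι u) (ι v) := fun hc => hnadj ((hadj u v).mp hc)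
    obtain ⟨i, hi, hi'⟩ := hR.2.2.2 (ι u) (ι v) (fun hc => huv (hι hc)) hna
    have hCi : i ∈ s₀ := Finset.mem_filter.mpr ⟨Finset.mem_univ i,
      ⟨u, Finset.mem_filter.mpr ⟨Finset.mem_univ u, hi⟩⟩⟩
    refine ⟨e.symm ⟨i, hCi⟩, ?_, ?_⟩
    · show η (ι u) ∈ rect (T (e (e.symm ⟨i, hCi⟩) : Fin m))
      rw [OrderIso.apply_symm_apply]
      exact hmem u i hi
    · show η (ι v) ∈ rect (T (e (e.symm ⟨i, hCi⟩) : Fin m))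
      rw [OrderIso.apply_symm_apply]
      exact hmem v i hi'
  · -- sum identity
    have h1 : ∑ j : Fin s₀.card, rvol (T (e j)) = ∑ i ∈ s₀, rvol (T i) := by
      rw [← Finset.sum_coe_sort s₀ (fun i => rvol (T i))]
      exact Fintype.sum_equiv e.toEquiv _ _ (fun j => rfl)
    have h2 : ∑ i ∈ s₀, rvol (T i) = ∑ i : Fin m, rvol (T i) := by
      refine Finset.sum_subset (Finset.subset_univ s₀) ?_
      intro i _ hi
      have hCempty : C i = ∅ := by
        by_contra hne
        exact hi (Finset.mem_filter.mpr ⟨Finset.mem_univ i,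
          Finset.nonempty_iff_ne_empty.mpr hne⟩)
      unfold rvol
      refine Finset.prod_eq_zero (Finset.mem_univ k₀) ?_
      rw [hT]
      simp [hCempty]
    rw [h1, h2]
    rfl

variable {V₁ V₂ : Type*} [Fintype V₁] [Fintype V₂]
  {G : SimpleGraph (V₁ ⊕ V₂)} {G₁ : SimpleGraph V₁} {G₂ : SimpleGraph V₂}

lemma split
    (hll : ∀ u v, G.Adj (inl u) (inl v) ↔ G₁.Adj u v)
    (hrr : ∀ u v, G.Adj (inr u) (inr v) ↔ G₂.Adj u v)
    (hlr : ∀ u v, G.Adj (inl u) (inr v))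
    {d : ℕ} (hd : 0 < d)
    {η : V₁ ⊕ V₂ → Fin d → ℕ} (h : IsSpaceEmbedding G d η)
    {m : ℕ} {R : Fin m → Fin d → Finset ℕ} (hR : IsRectCoCover G η R) :
    ∃ s₁ ∈ volSet G₁ d, ∃ s₂ ∈ volSet G₂ d, s₁ + s₂ ≤ ∑ i, rvol (R i) := by
  classical
  set k₀ : Fin d := ⟨0, hd⟩ with hk₀
  set P : Fin m → Fin d → Finset ℕ := fun i k =>
    ((Finset.univ.filter (fun u : V₁ => η (inl u) ∈ rect (R i))).image
      (fun u => η (inl u) k)) with hP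
  set Q : Fin m → Fin d → Finset ℕ := fun i k =>
    ((Finset.univ.filter (fun v : V₂ => η (inr v) ∈ rect (R i))).image
      (fun v => η (inr v) k)) with hQ
  have hPsub : ∀ i k, P i k ⊆ R i k := by
    intro i k a ha
    obtain ⟨u, hu, rfl⟩ := Finset.mem_image.mp ha
    exact (Finset.mem_filter.mp hu).2 k
  have hQsub : ∀ i k, Q i k ⊆ R i k := by
    intro i k a ha
    obtain ⟨v, hv, rfl⟩ := Finset.mem_image.mp ha
    exact (Finset.mem_filter.mp hv).2 k
  have hdisj : ∀ i k, Disjoint (P i k) (Q i k) := by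
    intro i k
    rw [Finset.disjoint_left]
    intro a ha ha'
    obtain ⟨u, -, rfl⟩ := Finset.mem_image.mp ha
    obtain ⟨v, -, hv⟩ := Finset.mem_image.mp ha'
    exact ((h.2 (inl u) (inr v)).mp (hlr u v) k) hv.symm
  have hcard : ∀ i k, (P i k).card + (Q i k).card ≤ (R i k).card := by
    intro i k
    rw [← Finset.card_union_of_disjoint (hdisj i k)]
    exact Finset.card_le_card (Finset.union_subset (hPsub i k) (hQsub i k))
  have key : ∀ i, (∏ k, (P i k).card) + (∏ k, (Q i k).card) ≤ rvol (R i) := fun i =>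
    Finset.prod_add_prod_le' (Finset.mem_univ k₀) (hcard i k₀)
      (fun j _ _ => Finset.card_le_card (hPsub i j))
      (fun j _ _ => Finset.card_le_card (hQsub i j))
  obtain ⟨s₁, hs₁, hs₁eq⟩ := restrict_cocover inl hll Sum.inl_injective hd h hR
  obtain ⟨s₂, hs₂, hs₂eq⟩ := restrict_cocover inr hrr Sum.inr_injective hd h hR
  refine ⟨s₁, hs₁, s₂, hs₂, ?_⟩
  rw [hs₁eq, hs₂eq, ← Finset.sum_add_distrib]
  exact Finset.sum_le_sum fun i _ => key i

end Split
section Main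
variable {V₁ V₂ : Type*} [Fintype V₁] [Fintype V₂]

lemma adj_compl_disj_inl_inl (F₁ : SimpleGraph V₁) (F₂ : SimpleGraph V₂) (u v : V₁) :
    (disjUnionGraph F₁ F₂)ᶜ.Adj (inl u) (inl v) ↔ F₁ᶜ.Adj u v := by
  simp [SimpleGraph.compl_adj, disjUnionGraph]

lemma adj_compl_disj_inr_inr (F₁ : SimpleGraph V₁) (F₂ : SimpleGraph V₂) (u v : V₂) :
    (disjUnionGraph F₁ F₂)ᶜ.Adj (inr u) (inr v) ↔ F₂ᶜ.Adj u v := by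
  simp [SimpleGraph.compl_adj, disjUnionGraph]

lemma adj_compl_disj_inl_inr (F₁ : SimpleGraph V₁) (F₂ : SimpleGraph V₂) (u : V₁) (v : V₂) :
    (disjUnionGraph F₁ F₂)ᶜ.Adj (inl u) (inr v) := by
  rw [SimpleGraph.compl_adj]
  refine ⟨Sum.inl_ne_inr, fun h => ?_⟩
  cases h

end Main
end Helpers

/-- For any two finite simple graphs `F¹, F²` and any `d ≥ 1`, the
`d`-measure is additive over disjoint unions:
`𝓗^d(F¹ ⊔ F²) = 𝓗^d(F¹) + 𝓗^d(F²)` in the extended nonnegative reals. -/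
theorem graphMeasure_disjUnion {V₁ V₂ : Type*} [Fintype V₁] [Fintype V₂]
    (F₁ : SimpleGraph V₁) (F₂ : SimpleGraph V₂) (d : ℕ) (hd : 0 < d) :
    graphMeasure (disjUnionGraph F₁ F₂) d = graphMeasure F₁ d + graphMeasure F₂ d := by
  classical
  have hll := adj_compl_disj_inl_inl F₁ F₂
  have hrr := adj_compl_disj_inr_inr F₁ F₂
  have hlr := adj_compl_disj_inl_inr F₁ F₂
  by_cases hE1 : ∃ η : V₁ → Fin d → ℕ, IsSpaceEmbedding F₁ᶜ d η
  · by_cases hE2 : ∃ η : V₂ → Fin d → ℕ, IsSpaceEmbedding F₂ᶜ d η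
    · -- both embeddable
      obtain ⟨η₁, hη₁⟩ := hE1
      obtain ⟨η₂, hη₂⟩ := hE2
      have hS₁ : (volSet F₁ᶜ d).Nonempty := volSet_nonempty hη₁
      have hS₂ : (volSet F₂ᶜ d).Nonempty := volSet_nonempty hη₂
      -- an embedding of the complement of the disjoint union
      obtain ⟨m₁', R₁', hR₁'⟩ := exists_cocover _ hη₁
      obtain ⟨m₂', R₂', hR₂'⟩ := exists_cocover _ hη₂
      obtain ⟨η', hη', -⟩ := combine hll hrr hlr hd hη₁ hη₂ hR₁' hR₂'
      have hSG : (volSet (disjUnionGraph F₁ F₂)ᶜ d).Nonempty := volSet_nonempty hη'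
      have hkey : dVol (disjUnionGraph F₁ F₂)ᶜ d = dVol F₁ᶜ d + dVol F₂ᶜ d := by
        refine le_antisymm ?_ ?_
        · obtain ⟨ηa, hηa, ma, Ra, hRa, hva⟩ := Nat.sInf_mem hS₁
          obtain ⟨ηb, hηb, mb, Rb, hRb, hvb⟩ := Nat.sInf_mem hS₂
          obtain ⟨ηc, hηc, Rc, hRc, hsum⟩ := combine hll hrr hlr hd hηa hηb hRa hRb
          rw [dVol_eq_sInf F₁ᶜ, dVol_eq_sInf F₂ᶜ, hva, hvb, ← hsum]
          exact Nat.sInf_le ⟨ηc, hηc, _, Rc, hRc, rfl⟩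
        · obtain ⟨ηc, hηc, mc, Rc, hRc, hvc⟩ := Nat.sInf_mem hSG
          obtain ⟨s₁, hs₁, s₂, hs₂, hle⟩ := split hll hrr hlr hd hηc hRc
          calc dVol F₁ᶜ d + dVol F₂ᶜ d ≤ s₁ + s₂ :=
                add_le_add (Nat.sInf_le hs₁) (Nat.sInf_le hs₂)
            _ ≤ ∑ i, rvol (Rc i) := hle
            _ = dVol (disjUnionGraph F₁ F₂)ᶜ d := hvc.symm
      rw [graphMeasure, graphMeasure, graphMeasure,
        if_pos ⟨η', hη'⟩, if_pos ⟨η₁, hη₁⟩, if_pos ⟨η₂, hη₂⟩, hkey, Nat.cast_add]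
    · -- F₂ᶜ not embeddable
      have hGE : ¬ ∃ η : V₁ ⊕ V₂ → Fin d → ℕ, IsSpaceEmbedding (disjUnionGraph F₁ F₂)ᶜ d η := by
        rintro ⟨η, hη⟩
        exact hE2 ⟨η ∘ Sum.inr, hη.1.comp Sum.inr_injective,
          fun u v => (hrr u v).symm.trans (hη.2 _ _)⟩
      simp [graphMeasure, hGE, hE2]
  · -- F₁ᶜ not embeddable
    have hGE : ¬ ∃ η : V₁ ⊕ V₂ → Fin d → ℕ, IsSpaceEmbedding (disjUnionGraph F₁ F₂)ᶜ d η := by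
      rintro ⟨η, hη⟩
      exact hE1 ⟨η ∘ Sum.inl, hη.1.comp Sum.inl_injective,
        fun u v => (hll u v).symm.trans (hη.2 _ _)⟩
    simp [graphMeasure, hGE, hE1]
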